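/- If a simple graph G on n vertices admits a partition of its vertex set into r δ-sets, then the sum of squares of the degrees satisfies Σᵥ deg(v)² ≤ n·σ₂(n₁,…,n_r) + 3·σ₃(n₁,…,n_r), where n₁,…,n_r are the sizes of the parts. -/

import Mathlib

open Finset

/-- A δ-set in a graph: every vertex in the set has degree at most `n - |S|`. -/
def IsDeltaSet {V : Type*} [Fintype V] (G : SimpleGraph V) [DecidableRel G.Adj]
    (S : Finset V) : Prop :=
  ∀ v ∈ S, G.degree v ≤ Fintype.card V - S.card

/-- The generalized chromatic number: the least `r` such that the vertex set
partitions into `r` δ-sets. -/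
noncomputable def genChrom {V : Type*} [Fintype V] [DecidableEq V]
    (G : SimpleGraph V) [DecidableRel G.Adj] : ℕ :=
  sInf {r | ∃ f : V → Fin r, ∀ i, IsDeltaSet G (Finset.univ.filter fun v => f v = i)}

/-- Quadratic mean of the degree sequence. -/
noncomputable def qmDeg {V : Type*} [Fintype V] (G : SimpleGraph V) [DecidableRel G.Adj] : ℝ :=
  Real.sqrt ((∑ v, (G.degree v : ℝ) ^ 2) / Fintype.card V)

/-- `k`-th elementary symmetric polynomial of `x : Fin r → ℝ`. -/
def esym {r : ℕ} (k : ℕ) (x : Fin r → ℝ) : ℝ :=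
  ∑ t ∈ Finset.univ.powersetCard k, ∏ i ∈ t, x i

section aux

variable {α : Type*} [DecidableEq α]

lemma esum_insert (x : α → ℝ) {a : α} {s : Finset α} (h : a ∉ s) (k : ℕ) :
    ∑ t ∈ (insert a s).powersetCard (k + 1), ∏ i ∈ t, x i =
      ∑ t ∈ s.powersetCard (k + 1), ∏ i ∈ t, x i +
        x a * ∑ t ∈ s.powersetCard k, ∏ i ∈ t, x i := by
  rw [Finset.powersetCard_succ_insert h k, Finset.sum_union, Finset.sum_image]
  · congr 1
    · rw [Finset.mul_sum]
      refine Finset.sum_congr rfl fun t ht => ?_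
      have hat : a ∉ t := fun hc => h ((Finset.mem_powersetCard.1 ht).1 hc)
      rw [Finset.prod_insert hat]
  · intro t ht u hu htu
    have hat : a ∉ t := fun hc => h ((Finset.mem_powersetCard.1 ht).1 hc)
    have hau : a ∉ u := fun hc => h ((Finset.mem_powersetCard.1 hu).1 hc)
    have := congrArg (Finset.erase · a) htu
    simpa [Finset.erase_insert hat, Finset.erase_insert hau] using this
  · rw [Finset.disjoint_right]
    intro t ht hts
    simp only [Finset.mem_image] at ht
    obtain ⟨u, _, rfl⟩ := ht
    exact h ((Finset.mem_powersetCard.1 hts).1 (Finset.mem_insert_self a u))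

lemma esum_one (x : α → ℝ) (s : Finset α) :
    ∑ t ∈ s.powersetCard 1, ∏ i ∈ t, x i = ∑ i ∈ s, x i := by
  classical
  induction s using Finset.induction_on with
  | empty => rw [Finset.powersetCard_eq_empty.2 (by simp)]; simp
  | insert _ _ h ih =>
    rw [show (1 : ℕ) = 0 + 1 from rfl] at *
    rw [esum_insert x h, ih, Finset.sum_insert h]
    simp [add_comm]

lemma esum_two (x : α → ℝ) (s : Finset α) :
    ∑ t ∈ s.powersetCard 2, ∏ i ∈ t, x i =
      ((∑ i ∈ s, x i) ^ 2 - ∑ i ∈ s, x i ^ 2) / 2 := by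
  classical
  induction s using Finset.induction_on with
  | empty => rw [Finset.powersetCard_eq_empty.2 (by simp)]; simp
  | @insert a s h ih =>
    rw [show (2 : ℕ) = 1 + 1 from rfl, esum_insert x h, ih, esum_one,
      Finset.sum_insert h, Finset.sum_insert h]
    ring

lemma esum_three (x : α → ℝ) (s : Finset α) :
    ∑ t ∈ s.powersetCard 3, ∏ i ∈ t, x i =
      ((∑ i ∈ s, x i) ^ 3 - 3 * (∑ i ∈ s, x i) * (∑ i ∈ s, x i ^ 2) +
        2 * ∑ i ∈ s, x i ^ 3) / 6 := by
  classical
  induction s using Finset.induction_on with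
  | empty => rw [Finset.powersetCard_eq_empty.2 (by simp)]; simp
  | @insert a s h ih =>
    rw [show (3 : ℕ) = 2 + 1 from rfl, esum_insert x h, ih, esum_two,
      Finset.sum_insert h, Finset.sum_insert h, Finset.sum_insert h]
    ring

end aux

theorem stmt3 {V : Type*} [Fintype V] [DecidableEq V] (G : SimpleGraph V) [DecidableRel G.Adj]
    (r : ℕ) (f : V → Fin r)
    (hδ : ∀ i, IsDeltaSet G (Finset.univ.filter fun v => f v = i)) :
    (∑ v, (G.degree v : ℝ) ^ 2) ≤
      (Fintype.card V : ℝ) *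
        esym 2 (fun i => ((Finset.univ.filter fun v => f v = i).card : ℝ)) +
      3 * esym 3 (fun i => ((Finset.univ.filter fun v => f v = i).card : ℝ)) := by
  classical
  set n : ℕ := Fintype.card V with hn
  set x : Fin r → ℝ := fun i => ((Finset.univ.filter fun v => f v = i).card : ℝ) with hx
  have hsum_x : ∑ i, x i = (n : ℝ) := by
    have : ∑ i, ((Finset.univ.filter fun v => f v = i).card : ℕ) = n := by
      rw [hn, ← Finset.card_univ]
      exact (Finset.card_eq_sum_card_fiberwise (fun v _ => Finset.mem_univ (f v))).symm
    rw [hx]; simp only []; exact_mod_cast this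
  -- fiberwise split
  have hsplit : (∑ v, (G.degree v : ℝ) ^ 2) =
      ∑ i, ∑ v ∈ Finset.univ.filter (fun v => f v = i), (G.degree v : ℝ) ^ 2 :=
    (Finset.sum_fiberwise Finset.univ f (fun v => (G.degree v : ℝ) ^ 2)).symm
  -- bound each fiber
  have hbound : ∀ i, ∑ v ∈ Finset.univ.filter (fun v => f v = i), (G.degree v : ℝ) ^ 2 ≤
      x i * ((n : ℝ) - x i) ^ 2 := by
    intro i
    set S := Finset.univ.filter (fun v => f v = i) with hS
    have hle : S.card ≤ n := by rw [hn, ← Finset.card_univ]; exact Finset.card_filter_le _ _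
    have key : ∀ v ∈ S, (G.degree v : ℝ) ^ 2 ≤ ((n : ℝ) - x i) ^ 2 := by
      intro v hv
      have h1 : G.degree v ≤ n - S.card := hδ i v hv
      have h2 : (G.degree v : ℝ) ≤ (n : ℝ) - x i := by
        have := Nat.cast_le (α := ℝ).2 h1
        rwa [Nat.cast_sub hle] at this
      exact pow_le_pow_left₀ (by positivity) h2 2
    calc ∑ v ∈ S, (G.degree v : ℝ) ^ 2 ≤ ∑ _v ∈ S, ((n : ℝ) - x i) ^ 2 :=
          Finset.sum_le_sum key
      _ = x i * ((n : ℝ) - x i) ^ 2 := by rw [Finset.sum_const, nsmul_eq_mul]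
  have hmain : (∑ v, (G.degree v : ℝ) ^ 2) ≤ ∑ i, x i * ((n : ℝ) - x i) ^ 2 := by
    rw [hsplit]; exact Finset.sum_le_sum fun i _ => hbound i
  refine hmain.trans ?_
  -- the identity
  have e2 := esum_two x Finset.univ
  have e3 := esum_three x Finset.univ
  have expand : ∑ i, x i * ((n : ℝ) - x i) ^ 2 =
      (n : ℝ) ^ 2 * (∑ i, x i) - 2 * (n : ℝ) * (∑ i, x i ^ 2) + ∑ i, x i ^ 3 := by
    rw [Finset.mul_sum, Finset.mul_sum, ← Finset.sum_sub_distrib, ← Finset.sum_add_distrib]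
    exact Finset.sum_congr rfl fun i _ => by ring
  rw [expand, hsum_x]
  have : esym 2 x = ((n : ℝ) ^ 2 - ∑ i, x i ^ 2) / 2 := by
    rw [esym, e2, hsum_x]
  rw [this]
  have : esym 3 x = ((n : ℝ) ^ 3 - 3 * (n : ℝ) * (∑ i, x i ^ 2) + 2 * ∑ i, x i ^ 3) / 6 := by
    rw [esym, e3, hsum_x]
  rw [this]
  apply le_of_eq
  ring
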